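/- Let (J,W) be a pure graphon, F₁,…,F_m graphs whose node sets contain a common set S that is independent in each F_i, T ⊆ S, and a₁,…,a_m real numbers. Fix x ∈ J^T and suppose ∑_{i=1}^m a_i t_S(F_i,W; x,y) = 0 for almost all y ∈ J^{S∖T}. Then the equation holds for all y ∈ J^{S∖T}. -/

import Mathlib

open MeasureTheory

/-- Extend an assignment given on (the image of) `S` inside the vertex set,
together with an assignment on the remaining vertices, to all vertices. -/
noncomputable def extendVia {S Vt J : Type*} [Fintype S] [DecidableEq Vt]
    (f : S → Vt) (z : S → J)
    (w : {v : Vt // v ∉ Finset.univ.image f} → J) (v : Vt) : J :=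
  if h : v ∈ Finset.univ.image f then z (Finset.mem_image.mp h).choose
  else w ⟨v, h⟩

/-- Combine an assignment on `T ⊆ S` with an assignment on `S ∖ T`. -/
noncomputable def combineAssign {S J : Type*} [DecidableEq S] (T : Finset S)
    (x : {u : S // u ∈ T} → J) (y : {u : S // u ∉ T} → J) (u : S) : J :=
  if h : u ∈ T then x ⟨u, h⟩ else y ⟨u, h⟩

/-- `|∏ p - ∏ q| ≤ ∑ |p - q|` for `[0,1]`-valued families. -/
lemma abs_prod_sub_prod_le {α : Type*} (s : Finset α) (p q : α → ℝ)
    (hp0 : ∀ a, 0 ≤ p a) (hp1 : ∀ a, p a ≤ 1)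
    (hq0 : ∀ a, 0 ≤ q a) (hq1 : ∀ a, q a ≤ 1) :
    |∏ a ∈ s, p a - ∏ a ∈ s, q a| ≤ ∑ a ∈ s, |p a - q a| := by
  induction s using Finset.cons_induction with
  | empty => simp
  | cons a s ha ih =>
    rw [Finset.prod_cons, Finset.prod_cons, Finset.sum_cons]
    have h1 : p a * ∏ b ∈ s, p b - q a * ∏ b ∈ s, q b
        = p a * (∏ b ∈ s, p b - ∏ b ∈ s, q b) + (p a - q a) * ∏ b ∈ s, q b := by ring
    have hq : |∏ b ∈ s, q b| ≤ 1 := by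
      rw [abs_of_nonneg (Finset.prod_nonneg fun b _ => hq0 b)]
      exact Finset.prod_le_one (fun b _ => hq0 b) (fun b _ => hq1 b)
    have hpa : |p a| ≤ 1 := by rw [abs_of_nonneg (hp0 a)]; exact hp1 a
    calc |p a * ∏ b ∈ s, p b - q a * ∏ b ∈ s, q b|
        ≤ |p a| * |∏ b ∈ s, p b - ∏ b ∈ s, q b| + |p a - q a| * |∏ b ∈ s, q b| := by
          rw [h1]; exact (abs_add_le _ _).trans (by rw [abs_mul, abs_mul])
      _ ≤ 1 * (∑ b ∈ s, |p b - q b|) + |p a - q a| * 1 :=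
          add_le_add (mul_le_mul hpa ih (abs_nonneg _) zero_le_one)
            (mul_le_mul_of_nonneg_left hq (abs_nonneg _))
      _ = |p a - q a| + ∑ b ∈ s, |p b - q b| := by ring

lemma pi_map_eval {ι : Type*} [Fintype ι] {α : ι → Type*} [∀ i, MeasurableSpace (α i)]
    (μ : ∀ i, Measure (α i)) [∀ i, IsProbabilityMeasure (μ i)] (j : ι) :
    (Measure.pi μ).map (Function.eval j) = μ j := by
  classical
  ext s hs
  rw [Measure.map_apply (measurable_pi_apply j) hs, Set.eval_preimage, Measure.pi_pi]
  rw [Fintype.prod_eq_single j (fun i hij => by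
    rw [Function.update_of_ne hij]; exact measure_univ)]
  rw [Function.update_self]

lemma integral_comp_eval {ι : Type*} [Fintype ι] {J : Type*} [MeasurableSpace J]
    (μ : Measure J) [IsProbabilityMeasure μ] (g : J → ℝ)
    (hg : AEStronglyMeasurable g μ) (j : ι) :
    ∫ w : ι → J, g (w j) ∂(Measure.pi fun _ => μ) = ∫ t, g t ∂μ := by
  have h : (Measure.pi fun _ : ι => μ).map (Function.eval j) = μ :=
    pi_map_eval (fun _ => μ) j
  calc ∫ w : ι → J, g (w j) ∂(Measure.pi fun _ => μ)
      = ∫ t, g t ∂((Measure.pi fun _ : ι => μ).map (Function.eval j)) :=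
        (integral_map (measurable_pi_apply j).aemeasurable (by rwa [h])).symm
    _ = ∫ t, g t ∂μ := by rw [h]

/-- Corollary: for a pure graphon `(J,W)`, graphs `F₁,…,F_m` containing a
common independent set `S`, `T ⊆ S` and reals `a₁,…,a_m`, if for a fixed
`x ∈ J^T` the linear relation `∑ aᵢ t_S(Fᵢ,W;x,y) = 0` holds for almost all
`y ∈ J^{S∖T}`, then it holds for all `y`. -/
theorem derandomize_density_relation
    {J : Type*} [MetricSpace J] [CompleteSpace J] [TopologicalSpace.SeparableSpace J]
    [MeasurableSpace J] [BorelSpace J]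
    (μ : Measure J) [IsProbabilityMeasure μ] [μ.IsOpenPosMeasure]
    (W : J → J → ℝ)
    (hWmeas : Measurable (fun p : J × J => W p.1 p.2))
    (hWsymm : ∀ x y, W x y = W y x)
    (hW0 : ∀ x y, 0 ≤ W x y) (hW1 : ∀ x y, W x y ≤ 1)
    (hdist : ∀ x y : J, dist x y = ∫ z, |W x z - W y z| ∂μ)
    {m : ℕ} {S : Type*} [Fintype S] [DecidableEq S]
    {V : Fin m → Type*} [∀ i, Fintype (V i)] [∀ i, DecidableEq (V i)]
    (E : ∀ i, Finset (V i × V i))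
    (s : ∀ i, S → V i) (hs : ∀ i, Function.Injective (s i))
    (hindep : ∀ i, ∀ e ∈ E i,
      ¬(e.1 ∈ Finset.univ.image (s i) ∧ e.2 ∈ Finset.univ.image (s i)))
    (a : Fin m → ℝ)
    (tS : Fin m → (S → J) → ℝ)
    (htS : ∀ i z, tS i z =
      ∫ w : {v : V i // v ∉ Finset.univ.image (s i)} → J,
        (∏ e ∈ E i, W (extendVia (s i) z w e.1) (extendVia (s i) z w e.2))
          ∂(Measure.pi fun _ => μ))
    (T : Finset S) (x : {u : S // u ∈ T} → J)
    (hae : ∀ᵐ y ∂(Measure.pi fun _ : {u : S // u ∉ T} => μ),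
      ∑ i, a i * tS i (combineAssign T x y) = 0) :
    ∀ y : {u : S // u ∉ T} → J, ∑ i, a i * tS i (combineAssign T x y) = 0 := by
  classical
  -- Lipschitz bound for `tS i`
  have key : ∀ i (z z' : S → J), |tS i z - tS i z'| ≤ (E i).card * dist z z' := by
    intro i z z'
    set K := {v : V i // v ∉ Finset.univ.image (s i)}
    set ν : Measure (K → J) := Measure.pi fun _ => μ with hν
    have hA : ∀ (z : S → J) (v : V i),
        Measurable fun w : K → J => extendVia (s i) z w v := by
      intro z v
      unfold extendVia
      by_cases h : v ∈ Finset.univ.image (s i)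
      · simp only [dif_pos h]; exact measurable_const
      · simp only [dif_neg h]; exact measurable_pi_apply _
    set P : (S → J) → (K → J) → ℝ := fun z w =>
      ∏ e ∈ E i, W (extendVia (s i) z w e.1) (extendVia (s i) z w e.2) with hP
    have hfm : ∀ (z : S → J) (e : V i × V i),
        Measurable fun w : K → J =>
          W (extendVia (s i) z w e.1) (extendVia (s i) z w e.2) :=
      fun z e => hWmeas.comp ((hA z e.1).prodMk (hA z e.2))
    have hPm : ∀ z : S → J, Measurable (P z) := fun z =>
      Finset.measurable_prod _ fun e _ => hfm z e
    have hP0 : ∀ z w, 0 ≤ P z w := fun z w =>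
      Finset.prod_nonneg fun e _ => hW0 _ _
    have hP1 : ∀ z w, P z w ≤ 1 := fun z w =>
      Finset.prod_le_one (fun e _ => hW0 _ _) (fun e _ => hW1 _ _)
    have hPint : ∀ z : S → J, Integrable (P z) ν := by
      intro z
      refine ⟨(hPm z).aestronglyMeasurable, HasFiniteIntegral.of_bounded (C := 1)
        (Filter.Eventually.of_forall fun w => ?_)⟩
      rw [Real.norm_eq_abs, abs_of_nonneg (hP0 z w)]
      exact hP1 z w
    set D : (V i × V i) → (K → J) → ℝ := fun e w =>
      |W (extendVia (s i) z w e.1) (extendVia (s i) z w e.2)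
        - W (extendVia (s i) z' w e.1) (extendVia (s i) z' w e.2)| with hD
    have hDm : ∀ e, Measurable (D e) := fun e => ((hfm z e).sub (hfm z' e)).abs
    have hDint : ∀ e, Integrable (D e) ν := by
      intro e
      refine ⟨(hDm e).aestronglyMeasurable, HasFiniteIntegral.of_bounded (C := 2)
        (Filter.Eventually.of_forall fun w => ?_)⟩
      rw [Real.norm_eq_abs, abs_abs]
      have h1 := abs_sub_abs_le_abs_sub (W (extendVia (s i) z w e.1) (extendVia (s i) z w e.2)) 0
      calc |W (extendVia (s i) z w e.1) (extendVia (s i) z w e.2)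
          - W (extendVia (s i) z' w e.1) (extendVia (s i) z' w e.2)|
          ≤ |W (extendVia (s i) z w e.1) (extendVia (s i) z w e.2)|
            + |W (extendVia (s i) z' w e.1) (extendVia (s i) z' w e.2)| := abs_sub _ _
        _ ≤ 1 + 1 := by
            gcongr <;> rw [abs_of_nonneg (hW0 _ _)] <;> exact hW1 _ _
        _ = 2 := by norm_num
    -- per-edge bound
    have hE : ∀ e ∈ E i, ∫ w, D e w ∂ν ≤ dist z z' := by
      intro e he
      by_cases h1 : e.1 ∈ Finset.univ.image (s i)
      · by_cases h2 : e.2 ∈ Finset.univ.image (s i)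
        · exact absurd ⟨h1, h2⟩ (hindep i e he)
        · set u := (Finset.mem_image.mp h1).choose with hu
          set j : K := ⟨e.2, h2⟩ with hj
          have hDe : ∀ w : K → J, D e w = |W (z u) (w j) - W (z' u) (w j)| := by
            intro w
            simp only [hD, extendVia, dif_pos h1, dif_neg h2]; rfl
          have hgm : AEStronglyMeasurable (fun t => |W (z u) t - W (z' u) t|) μ := by
            refine (Measurable.abs ?_).aestronglyMeasurable
            exact ((hWmeas.comp (measurable_const.prodMk measurable_id)).sub
              (hWmeas.comp (measurable_const.prodMk measurable_id)))
          calc ∫ w, D e w ∂ν = ∫ w : K → J, |W (z u) (w j) - W (z' u) (w j)|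
                ∂(Measure.pi fun _ => μ) := by
                rw [hν]; exact integral_congr_ae (Filter.Eventually.of_forall hDe)
            _ = ∫ t, |W (z u) t - W (z' u) t| ∂μ := integral_comp_eval μ _ hgm j
            _ = dist (z u) (z' u) := (hdist _ _).symm
            _ ≤ dist z z' := dist_le_pi_dist z z' u
      · by_cases h2 : e.2 ∈ Finset.univ.image (s i)
        · set u := (Finset.mem_image.mp h2).choose with hu
          set j : K := ⟨e.1, h1⟩ with hj
          have hDe : ∀ w : K → J, D e w = |W (z u) (w j) - W (z' u) (w j)| := by
            intro w
            simp only [hD, extendVia, dif_neg h1, dif_pos h2]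
            rw [hWsymm (w j) (z u), hWsymm (w j) (z' u)]
          have hgm : AEStronglyMeasurable (fun t => |W (z u) t - W (z' u) t|) μ := by
            refine (Measurable.abs ?_).aestronglyMeasurable
            exact ((hWmeas.comp (measurable_const.prodMk measurable_id)).sub
              (hWmeas.comp (measurable_const.prodMk measurable_id)))
          calc ∫ w, D e w ∂ν = ∫ w : K → J, |W (z u) (w j) - W (z' u) (w j)|
                ∂(Measure.pi fun _ => μ) := by
                rw [hν]; exact integral_congr_ae (Filter.Eventually.of_forall hDe)
            _ = ∫ t, |W (z u) t - W (z' u) t| ∂μ := integral_comp_eval μ _ hgm j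
            _ = dist (z u) (z' u) := (hdist _ _).symm
            _ ≤ dist z z' := dist_le_pi_dist z z' u
        · have hDe : ∀ w : K → J, D e w = 0 := by
            intro w
            simp only [hD, extendVia, dif_neg h1, dif_neg h2, sub_self, abs_zero]
          rw [integral_congr_ae (Filter.Eventually.of_forall hDe), integral_zero]
          exact dist_nonneg
    have habs : |tS i z - tS i z'| ≤ ∫ w, ∑ e ∈ E i, D e w ∂ν := by
      rw [htS i z, htS i z', ← integral_sub (hPint z) (hPint z')]
      calc |∫ w, (P z w - P z' w) ∂ν| ≤ ∫ w, |P z w - P z' w| ∂ν := by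
            rw [← Real.norm_eq_abs]
            exact (norm_integral_le_integral_norm _).trans (le_of_eq (by
              simp only [Real.norm_eq_abs]))
        _ ≤ ∫ w, ∑ e ∈ E i, D e w ∂ν := by
            refine integral_mono ((hPint z).sub (hPint z')).abs
              (integrable_finset_sum _ fun e _ => hDint e) fun w => ?_
            exact abs_prod_sub_prod_le (E i) _ _ (fun e => hW0 _ _) (fun e => hW1 _ _)
              (fun e => hW0 _ _) (fun e => hW1 _ _)
    calc |tS i z - tS i z'| ≤ ∫ w, ∑ e ∈ E i, D e w ∂ν := habs
      _ = ∑ e ∈ E i, ∫ w, D e w ∂ν := integral_finset_sum _ fun e _ => hDint e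
      _ ≤ ∑ _e ∈ E i, dist z z' := Finset.sum_le_sum hE
      _ = (E i).card * dist z z' := by rw [Finset.sum_const, nsmul_eq_mul]
  -- continuity
  have hcomb : LipschitzWith 1 (fun y : {u : S // u ∉ T} → J => combineAssign T x y) := by
    apply LipschitzWith.of_dist_le_mul
    intro y y'
    rw [NNReal.coe_one, one_mul]
    refine (dist_pi_le_iff dist_nonneg).mpr fun u => ?_
    by_cases h : u ∈ T
    · simp only [combineAssign, dif_pos h, dist_self]; exact dist_nonneg
    · simp only [combineAssign, dif_neg h]
      exact dist_le_pi_dist y y' ⟨u, h⟩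
  have hcont : ∀ i, Continuous fun y : {u : S // u ∉ T} → J =>
      tS i (combineAssign T x y) := by
    intro i
    have hl : LipschitzWith ((E i).card) (tS i) := by
      apply LipschitzWith.of_dist_le_mul
      intro z z'
      rw [Real.dist_eq]
      simpa using key i z z'
    exact (hl.comp hcomb).continuous
  have hf : Continuous fun y : {u : S // u ∉ T} → J =>
      ∑ i, a i * tS i (combineAssign T x y) :=
    continuous_finset_sum _ fun i _ => continuous_const.mul (hcont i)
  have heq : (fun y : {u : S // u ∉ T} → J => ∑ i, a i * tS i (combineAssign T x y))
      = fun _ => (0 : ℝ) :=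
    (hf.ae_eq_iff_eq (Measure.pi fun _ : {u : S // u ∉ T} => μ) continuous_const).mp hae
  intro y
  exact congrFun heq y
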